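/- Let t be a real number with 0 < t ≤ 2/(n+1) and let s ∈ ℝ. Then the homology class [y_n] ∈ H(C∞, ∂) lies in the image of the map H(C_{t,s}, ∂) → H(C∞, ∂) induced by the inclusion C_{t,s} ⊆ C∞ if and only if s ≥ nt/2. (This is the algebraic content of the first regime of Theorem C of the paper, where Υ_{T_{2,3;n,1}}(t) = −nt for t ≤ 2/(1+n).) -/

import Mathlib

/-- The labels of the `F[U,U⁻¹]`-basis `S` of `CFK^∞(T_{2,3;n,1})`. -/
inductive Gen : Type
  | x (k : ℕ) | x' (k : ℕ) | y (k : ℕ) | y' (k : ℕ) | z (k : ℕ) | w (k : ℕ)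
  deriving DecidableEq

/-- The validity predicate carving out the basis set `S` for a given `n`:
`S = {y_n, x_n, y'_1} ∪ {x'_k, y'_k : 2 ≤ k ≤ n} ∪ {x_k, z_k : 2 ≤ k ≤ n−1} ∪ {y_k, w_k : 1 ≤ k ≤ n−1}`,
where we encode `x_n` as `.x n`, `y_n` as `.y n` and `y'_1` as `.y' 1`. -/
def Gen.Valid (n : ℕ) : Gen → Prop
  | .x k => 2 ≤ k ∧ k ≤ n
  | .x' k => 2 ≤ k ∧ k ≤ n
  | .y k => 1 ≤ k ∧ k ≤ n
  | .y' k => 1 ≤ k ∧ k ≤ n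
  | .z k => 2 ≤ k ∧ k ≤ n - 1
  | .w k => 1 ≤ k ∧ k ≤ n - 1

/-- The algebraic filtration `A₁` on `S`. -/
def Gen.A1 : Gen → ℤ
  | .x _ => 1
  | .x' k => (k : ℤ)
  | .y _ => 0
  | .y' k => (k : ℤ)
  | .z _ => 1
  | .w _ => 0

/-- The Alexander filtration `A₂` on `S`. -/
def Gen.A2 : Gen → ℤ
  | .x k => (k : ℤ)
  | .x' _ => 1
  | .y k => (k : ℤ)
  | .y' _ => 0
  | .z _ => 1
  | .w _ => 0

/-- The Maslov grading `M` on `S`. -/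
def Gen.M : Gen → ℤ
  | .x _ => 1
  | .x' _ => 1
  | .y _ => 0
  | .y' _ => 0
  | .z _ => 0
  | .w _ => -1

/-- The vertical differential `∂_V` on the basis `S`:
`∂_V x_n = y'_1`, `∂_V x_k = z_k` (`2 ≤ k ≤ n−1`), `∂_V x'_k = y'_k` (`2 ≤ k ≤ n`),
`∂_V y_k = w_k` (`1 ≤ k ≤ n−1`), and `∂_V σ = 0` otherwise. -/
def Gen.dV (n : ℕ) : Gen → Option Gen
  | .x k => if k = n then some (.y' 1) else some (.z k)
  | .x' k => some (.y' k)
  | .y k => if k = n then none else some (.w k)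
  | _ => none

/-- The basis set `S`. -/
abbrev SGen (n : ℕ) := {g : Gen // g.Valid n}

/-- `C^∞` as an `F = ℤ/2`-vector space with basis `{U^m σ : m ∈ ℤ, σ ∈ S}`;
the pair `(m, σ)` encodes the basis vector `U^m σ`, whose bifiltration is
`(A₁ σ − m, A₂ σ − m)` and whose Maslov grading is `M σ − 2m`.  (The value of a
finitely supported function at `(m, σ)` is the coefficient of `U^m σ`.) -/
abbrev Cinf (n : ℕ) := (ℤ × SGen n) →₀ ZMod 2

/-- The basis vector `U^m σ` of `C^∞`. -/
noncomputable def gen (n : ℕ) (m : ℤ) (σ : SGen n) : Cinf n :=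
  Finsupp.single (m, σ) 1

lemma d_apply (n : ℕ) (d : Cinf n →ₗ[ZMod 2] Cinf n) (ξ : Cinf n) (p : ℤ × SGen n) :
    d ξ p = ∑ q ∈ ξ.support, ξ q * d (gen n q.1 q.2) p := by
  have h1 : ξ = ∑ q ∈ ξ.support, ξ q • gen n q.1 q.2 := by
    conv_lhs => rw [← Finsupp.sum_single ξ]
    rw [Finsupp.sum]
    refine Finset.sum_congr rfl fun q _ => ?_
    simp [gen, Finsupp.smul_single]
  conv_lhs => rw [h1]
  rw [map_sum, Finsupp.finset_sum_apply]
  refine Finset.sum_congr rfl fun q _ => ?_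
  rw [map_smul, Finsupp.smul_apply, smul_eq_mul]
@[simp] lemma Gen.dV_x (n j : ℕ) : Gen.dV n (.x j) = if j = n then some (.y' 1) else some (.z j) := rfl
@[simp] lemma Gen.dV_x' (n j : ℕ) : Gen.dV n (.x' j) = some (.y' j) := rfl
@[simp] lemma Gen.dV_y (n j : ℕ) : Gen.dV n (.y j) = if j = n then none else some (.w j) := rfl
@[simp] lemma Gen.dV_y' (n j : ℕ) : Gen.dV n (.y' j) = none := rfl
@[simp] lemma Gen.dV_z (n j : ℕ) : Gen.dV n (.z j) = none := rfl
@[simp] lemma Gen.dV_w (n j : ℕ) : Gen.dV n (.w j) = none := rfl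
theorem statement_8 (n : ℕ) (hn : 2 ≤ n)
    (d : Cinf n →ₗ[ZMod 2] Cinf n)
    -- (i) ∂ ∘ ∂ = 0
    (hdd : ∀ v, d (d v) = 0)
    -- F[U,U⁻¹]-linearity: ∂ commutes with multiplication by U (the shift (m,σ) ↦ (m+1,σ))
    (hU : ∀ (m : ℤ) (σ : SGen n) (m' : ℤ) (σ' : SGen n),
      d (gen n m σ) (m', σ') = d (gen n (m + 1) σ) (m' + 1, σ'))
    -- (ii) ∂ is homogeneous of Maslov degree −1
    (hM : ∀ (m : ℤ) (σ : SGen n) (m' : ℤ) (σ' : SGen n),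
      d (gen n m σ) (m', σ') ≠ 0 → σ'.1.M - 2 * m' = σ.1.M - 2 * m - 1)
    -- (iii) ∂ strictly drops the bifiltration
    (hF : ∀ (m : ℤ) (σ : SGen n) (m' : ℤ) (σ' : SGen n),
      d (gen n m σ) (m', σ') ≠ 0 →
        σ'.1.A1 - m' ≤ σ.1.A1 - m ∧ σ'.1.A2 - m' ≤ σ.1.A2 - m ∧
          ¬(σ'.1.A1 - m' = σ.1.A1 - m ∧ σ'.1.A2 - m' = σ.1.A2 - m))
    -- (iv) the vertical components of ∂ (equal algebraic filtration) are exactly ∂_V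
    (hV : ∀ (σ : SGen n) (m' : ℤ) (σ' : SGen n),
      σ'.1.A1 - m' = σ.1.A1 →
        d (gen n 0 σ) (m', σ') = if σ.1.dV n = some σ'.1 ∧ m' = 0 then 1 else 0)
    -- (v) the coefficient of y_n in ∂x_n equals 1
    (hEnd : d (gen n 0 ⟨Gen.x n, hn, le_rfl⟩) (0, ⟨Gen.y n, by omega, le_rfl⟩) = 1)
    (t s : ℝ) (ht0 : 0 < t) (ht1 : t ≤ 2 / ((n : ℝ) + 1)) :
    -- [y_n] is in the image of H(C_{t,s}) → H(C∞) iff s ≥ nt/2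
    (∃ v ∈ Submodule.span (ZMod 2)
        {u : Cinf n | ∃ (m : ℤ) (σ : SGen n), ((σ.1.A2 - m : ℤ) : ℝ) ≤ (2 / t) * s + (1 - 2 / t) * ((σ.1.A1 - m : ℤ) : ℝ) ∧ u = gen n m σ},
        d v = 0 ∧ ∃ ξ : Cinf n, gen n 0 ⟨Gen.y n, by omega, le_rfl⟩ - v = d ξ) ↔
      (n : ℝ) * t / 2 ≤ s := by
  classical
  -- basic real facts
  have h2t : (0:ℝ) < 2 / t := by positivity
  have hn1 : (0:ℝ) < (n:ℝ) + 1 := by positivity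
  have hlam : (n:ℝ) + 1 ≤ 2 / t := by
    rw [le_div_iff₀ ht0]
    have h2 : t * ((n:ℝ) + 1) ≤ 2 := (le_div_iff₀ hn1).mp ht1
    linarith
  have he : 2 / t * ((n:ℝ) * t / 2) = (n:ℝ) := by field_simp
  -- the shift lemma
  have hshift : ∀ (m : ℤ) (σ : SGen n) (m' : ℤ) (σ' : SGen n),
      d (gen n m σ) (m', σ') = d (gen n 0 σ) (m' - m, σ') := by
    intro m
    induction m using Int.induction_on with
    | zero => intro σ m' σ'; rw [sub_zero]
    | succ i ih =>
      intro σ m' σ'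
      have e1 := hU (i : ℤ) σ (m' - 1) σ'
      rw [show (m' : ℤ) - 1 + 1 = m' from by ring] at e1
      rw [← e1, ih σ (m' - 1) σ', show (m' : ℤ) - 1 - i = m' - (i + 1) from by ring]
    | pred i ih =>
      intro σ m' σ'
      have e1 := hU (-(i : ℤ) - 1) σ m' σ'
      rw [show -(i : ℤ) - 1 + 1 = -(i:ℤ) from by ring] at e1
      rw [e1, ih σ (m' + 1) σ', show (m' : ℤ) + 1 - -(i:ℤ) = m' - (-(i:ℤ) - 1) from by ring]
  -- the vertical differential formula at an arbitrary power of U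
  have hV' : ∀ (m : ℤ) (σ : SGen n) (m' : ℤ) (σ' : SGen n),
      σ'.1.A1 - m' = σ.1.A1 - m →
      d (gen n m σ) (m', σ') = if σ.1.dV n = some σ'.1 ∧ m' = m then 1 else 0 := by
    intro m σ m' σ' h
    rw [hshift m σ m' σ', hV σ (m' - m) σ' (by omega)]
    exact if_congr (and_congr_right fun _ => sub_eq_zero) rfl rfl
  -- classification of sources hitting y'_k
  have cof : ∀ (k : ℕ) (hk1 : 1 ≤ k) (hkn : k ≤ n) (q : ℤ × SGen n),
      d (gen n q.1 q.2) (0, ⟨Gen.y' k, hk1, hkn⟩) ≠ 0 →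
      (∃ (j : ℕ) (h2 : 2 ≤ j) (hj : j ≤ n), k ≤ j ∧ q = (0, ⟨Gen.x' j, h2, hj⟩)) ∨
      (k = 1 ∧ q = (0, ⟨Gen.x n, hn, le_rfl⟩)) := by
    rintro k hk1 hkn ⟨m, g, hg⟩ hne
    have hm := hM m ⟨g, hg⟩ 0 ⟨Gen.y' k, hk1, hkn⟩ hne
    have hf := hF m ⟨g, hg⟩ 0 ⟨Gen.y' k, hk1, hkn⟩ hne
    cases g with
    | x j =>
      simp only [Gen.M] at hm
      obtain rfl : m = 0 := by omega
      simp only [Gen.A1, Gen.A2] at hf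
      obtain rfl : k = 1 := by omega
      rw [hV' 0 _ 0 _ (by simp [Gen.A1])] at hne
      by_cases hj : j = n
      · subst hj
        right
        exact ⟨rfl, rfl⟩
      · simp [hj] at hne
    | x' j =>
      simp only [Gen.M] at hm
      obtain rfl : m = 0 := by omega
      simp only [Gen.A1, Gen.A2] at hf
      left
      exact ⟨j, hg.1, hg.2, by omega, rfl⟩
    | y j => simp only [Gen.M] at hm; omega
    | y' j => simp only [Gen.M] at hm; omega
    | z j => simp only [Gen.M] at hm; omega
    | w j =>
      simp only [Gen.M] at hm
      obtain rfl : m = -1 := by omega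
      simp only [Gen.A1, Gen.A2] at hf
      obtain rfl : k = 1 := by omega
      rw [hV' (-1) _ 0 _ (by simp [Gen.A1])] at hne
      simp at hne
  -- classification of sources hitting y_n
  have cofn : ∀ (q : ℤ × SGen n),
      d (gen n q.1 q.2) (0, ⟨Gen.y n, by omega, le_rfl⟩) ≠ 0 →
      q = (0, ⟨Gen.x n, hn, le_rfl⟩) := by
    rintro ⟨m, g, hg⟩ hne
    have hm := hM m ⟨g, hg⟩ 0 ⟨Gen.y n, by omega, le_rfl⟩ hne
    have hf := hF m ⟨g, hg⟩ 0 ⟨Gen.y n, by omega, le_rfl⟩ hne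
    cases g with
    | x j =>
      simp only [Gen.M] at hm
      obtain rfl : m = 0 := by omega
      simp only [Gen.A1, Gen.A2] at hf
      obtain rfl : j = n := by
        have := hg.2
        omega
      rfl
    | x' j =>
      simp only [Gen.M] at hm
      obtain rfl : m = 0 := by omega
      simp only [Gen.A1, Gen.A2] at hf
      omega
    | y j => simp only [Gen.M] at hm; omega
    | y' j => simp only [Gen.M] at hm; omega
    | z j => simp only [Gen.M] at hm; omega
    | w j =>
      simp only [Gen.M] at hm
      obtain rfl : m = -1 := by omega
      simp only [Gen.A1, Gen.A2] at hf
      omega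
  -- value of the vertical differentials we use
  have val1 : ∀ (j : ℕ) (hj : Gen.Valid n (Gen.x' j)) (hy : Gen.Valid n (Gen.y' j)),
      d (gen n 0 ⟨Gen.x' j, hj⟩) (0, ⟨Gen.y' j, hy⟩) = 1 := by
    intro j hj hy
    rw [hV' 0 _ 0 _ (by simp [Gen.A1])]
    simp
  have val2 : ∀ (hy : Gen.Valid n (Gen.y' 1)),
      d (gen n 0 ⟨Gen.x n, hn, le_rfl⟩) (0, ⟨Gen.y' 1, hy⟩) = 1 := by
    intro hy
    rw [hV' 0 _ 0 _ (by simp [Gen.A1])]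
    simp
  constructor
  · -- forward direction
    rintro ⟨v, hv, hdv, ξ, hξ⟩
    by_contra hs
    push_neg at hs
    have hsn : 2 / t * s < (n:ℝ) := by
      have h1 := mul_lt_mul_of_pos_left hs h2t
      rwa [he] at h1
    -- vanishing of v outside C_{t,s}
    have hvz : ∀ p : ℤ × SGen n,
        ¬ (((p.2.1.A2 - p.1 : ℤ) : ℝ) ≤ (2 / t) * s + (1 - 2 / t) * ((p.2.1.A1 - p.1 : ℤ) : ℝ)) →
        v p = 0 := by
      intro p hp
      have hle : Submodule.span (ZMod 2)
          {u : Cinf n | ∃ (m : ℤ) (σ : SGen n), ((σ.1.A2 - m : ℤ) : ℝ) ≤ (2 / t) * s + (1 - 2 / t) * ((σ.1.A1 - m : ℤ) : ℝ) ∧ u = gen n m σ}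
          ≤ LinearMap.ker (Finsupp.lapply p) := by
        rw [Submodule.span_le]
        rintro u ⟨m, σ, hmσ, rfl⟩
        simp only [SetLike.mem_coe, LinearMap.mem_ker, Finsupp.lapply_apply]
        rw [gen, Finsupp.single_apply, if_neg]
        intro h
        exact hp (h ▸ hmσ)
      have := hle hv
      simpa using this
    have hy'z : ∀ (j : ℕ), 1 ≤ j → ∀ (h : Gen.Valid n (Gen.y' j)), v (0, ⟨Gen.y' j, h⟩) = 0 := by
      intro j hj1 h
      refine hvz _ ?_
      show ¬ (((0 - 0 : ℤ) : ℝ) ≤ (2 / t) * s + (1 - 2 / t) * (((j : ℤ) - 0 : ℤ) : ℝ))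
      push_cast
      rw [not_le]
      have c1 : (1:ℝ) ≤ (j:ℝ) := by exact_mod_cast hj1
      have c2 : (1:ℝ) - 2/t ≤ -((n:ℝ)) := by linarith
      have c3 : ((1:ℝ) - 2/t) * (j:ℝ) ≤ (-(n:ℝ)) * (j:ℝ) :=
        mul_le_mul_of_nonneg_right c2 (by linarith)
      have c4 : (n:ℝ) * 1 ≤ (n:ℝ) * (j:ℝ) :=
        mul_le_mul_of_nonneg_left c1 (by positivity)
      nlinarith
    have hynz : v (0, ⟨Gen.y n, by omega, le_rfl⟩) = 0 := by
      refine hvz _ ?_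
      show ¬ ((((n:ℤ) - 0 : ℤ) : ℝ) ≤ (2 / t) * s + (1 - 2 / t) * (((0:ℤ) - 0 : ℤ) : ℝ))
      push_cast
      rw [not_le]
      nlinarith
    have hdxp : ∀ p, d ξ p = gen n 0 ⟨Gen.y n, by omega, le_rfl⟩ p - v p := by
      intro p
      have h1 := DFunLike.congr_fun hξ p
      rw [Finsupp.sub_apply] at h1
      exact h1.symm
    -- the downward induction killing the x' coefficients
    have hstep : ∀ (j : ℕ) (hj : Gen.Valid n (Gen.x' j)),
        (∀ (j' : ℕ) (hj' : Gen.Valid n (Gen.x' j')), j < j' → ξ (0, ⟨Gen.x' j', hj'⟩) = 0) →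
        ξ (0, ⟨Gen.x' j, hj⟩) = 0 := by
      intro j hj IH
      have hj1 : 1 ≤ j := le_trans one_le_two hj.1
      have hj2 : 2 ≤ j := hj.1
      have hzero : d ξ (0, ⟨Gen.y' j, hj1, hj.2⟩) = 0 := by
        rw [hdxp]
        have h1 : gen n 0 ⟨Gen.y n, by omega, le_rfl⟩ ((0 : ℤ), (⟨Gen.y' j, hj1, hj.2⟩ : SGen n)) = 0 := by
          simp [gen, Finsupp.single_apply]
          exact fun h => by cases h
        rw [h1, hy'z j hj1 ⟨hj1, hj.2⟩, sub_zero]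
      rw [d_apply] at hzero
      have hsum : ∑ q ∈ ξ.support, ξ q * d (gen n q.1 q.2) (0, ⟨Gen.y' j, hj1, hj.2⟩)
          = ξ (0, ⟨Gen.x' j, hj⟩) := by
        rw [Finset.sum_eq_single ((0:ℤ), (⟨Gen.x' j, hj⟩ : SGen n))]
        · rw [val1 j hj ⟨hj1, hj.2⟩, mul_one]
        · intro b hb hbne
          by_cases hz : d (gen n b.1 b.2) (0, ⟨Gen.y' j, hj1, hj.2⟩) = 0
          · rw [hz, mul_zero]
          · rcases cof j hj1 hj.2 b hz with ⟨j', h2', hj', hle, rfl⟩ | ⟨hk1, rfl⟩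
            · rcases eq_or_lt_of_le hle with rfl | hlt
              · exact absurd rfl hbne
              · rw [IH j' ⟨h2', hj'⟩ hlt, zero_mul]
            · exact absurd hk1 (by omega)
        · intro h
          rw [Finsupp.notMem_support_iff.mp h, zero_mul]
      rw [hsum] at hzero
      exact hzero
    have hx' : ∀ (j : ℕ) (hj : Gen.Valid n (Gen.x' j)), ξ (0, ⟨Gen.x' j, hj⟩) = 0 := by
      have aux : ∀ (N j : ℕ) (hj : Gen.Valid n (Gen.x' j)), n - j ≤ N → ξ (0, ⟨Gen.x' j, hj⟩) = 0 := by
        intro N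
        induction N with
        | zero =>
          intro j hj hN
          exact hstep j hj (fun j' hj' hlt => absurd hj'.2 (by omega))
        | succ N ih =>
          intro j hj hN
          exact hstep j hj (fun j' hj' hlt => ih j' hj' (by omega))
      exact fun j hj => aux (n - j) j hj le_rfl
    -- kill the x_n coefficient
    have hy1v : Gen.Valid n (Gen.y' 1) := ⟨le_rfl, by omega⟩
    have hxn : ξ (0, ⟨Gen.x n, hn, le_rfl⟩) = 0 := by
      have hzero : d ξ (0, ⟨Gen.y' 1, hy1v⟩) = 0 := by
        rw [hdxp]
        have h1 : gen n 0 ⟨Gen.y n, by omega, le_rfl⟩ ((0:ℤ), (⟨Gen.y' 1, hy1v⟩ : SGen n)) = 0 := by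
          simp [gen, Finsupp.single_apply]
          exact fun h => by cases h
        rw [h1, hy'z 1 le_rfl _, sub_zero]
      rw [d_apply] at hzero
      have hsum : ∑ q ∈ ξ.support, ξ q * d (gen n q.1 q.2) (0, ⟨Gen.y' 1, hy1v⟩)
          = ξ (0, ⟨Gen.x n, hn, le_rfl⟩) := by
        rw [Finset.sum_eq_single ((0:ℤ), (⟨Gen.x n, hn, le_rfl⟩ : SGen n))]
        · rw [val2 hy1v, mul_one]
        · intro b hb hbne
          by_cases hz : d (gen n b.1 b.2) (0, ⟨Gen.y' 1, hy1v⟩) = 0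
          · rw [hz, mul_zero]
          · rcases cof 1 le_rfl (by omega) b hz with ⟨j', h2', hj', hle, rfl⟩ | ⟨hk1, rfl⟩
            · rw [hx' j' ⟨h2', hj'⟩, zero_mul]
            · exact absurd rfl hbne
        · intro h
          rw [Finsupp.notMem_support_iff.mp h, zero_mul]
      rw [hsum] at hzero
      exact hzero
    -- derive the contradiction from the y_n coefficient
    have hone : d ξ (0, ⟨Gen.y n, by omega, le_rfl⟩) = 1 := by
      rw [hdxp]
      have h1 : gen n 0 ⟨Gen.y n, by omega, le_rfl⟩ ((0:ℤ), (⟨Gen.y n, by omega, le_rfl⟩ : SGen n)) = 1 := by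
        simp [gen, Finsupp.single_apply]
      rw [h1, hynz, sub_zero]
    rw [d_apply] at hone
    have hsum : ∑ q ∈ ξ.support, ξ q * d (gen n q.1 q.2) (0, ⟨Gen.y n, by omega, le_rfl⟩)
        = 0 := by
      rw [Finset.sum_eq_single ((0:ℤ), (⟨Gen.x n, hn, le_rfl⟩ : SGen n))]
      · rw [hxn, zero_mul]
      · intro b hb hbne
        by_cases hz : d (gen n b.1 b.2) (0, ⟨Gen.y n, by omega, le_rfl⟩) = 0
        · rw [hz, mul_zero]
        · exact absurd (cofn b hz) hbne
      · intro h
        rw [Finsupp.notMem_support_iff.mp h, zero_mul]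
    rw [hsum] at hone
    exact one_ne_zero hone.symm
  · -- backward direction : take v = y_n itself
    intro hs
    refine ⟨gen n 0 ⟨Gen.y n, by omega, le_rfl⟩, ?_, ?_, 0, by rw [sub_self, map_zero]⟩
    · apply Submodule.subset_span
      refine ⟨0, ⟨Gen.y n, by omega, le_rfl⟩, ?_, rfl⟩
      show (((n:ℤ) - 0 : ℤ) : ℝ) ≤ (2 / t) * s + (1 - 2 / t) * (((0:ℤ) - 0 : ℤ) : ℝ)
      push_cast
      have hge : (n:ℝ) ≤ 2 / t * s := by
        have h1 := mul_le_mul_of_nonneg_left hs h2t.le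
        rwa [he] at h1
      linarith
    · -- d y_n = 0
      ext p
      obtain ⟨m', g', hg'⟩ := p
      rw [Finsupp.coe_zero, Pi.zero_apply]
      by_contra hne
      have hm := hM 0 _ m' ⟨g', hg'⟩ hne
      have hf := hF 0 _ m' ⟨g', hg'⟩ hne
      cases g' with
      | x j =>
        simp only [Gen.M] at hm
        obtain rfl : m' = 1 := by omega
        rw [hV' 0 _ 1 _ (by simp [Gen.A1])] at hne
        simp at hne
      | x' j =>
        simp only [Gen.M] at hm
        obtain rfl : m' = 1 := by omega
        simp only [Gen.A1, Gen.A2] at hf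
        have := hg'.1
        omega
      | y j => simp only [Gen.M] at hm; omega
      | y' j => simp only [Gen.M] at hm; omega
      | z j => simp only [Gen.M] at hm; omega
      | w j =>
        simp only [Gen.M] at hm
        obtain rfl : m' = 0 := by omega
        rw [hV' 0 _ 0 _ (by simp [Gen.A1])] at hne
        simp at hne
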